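/- The total number of φ-monotone paths on the cross-polytope ◇^n equals (2^{2n−1} − 2)/3. -/

import Mathlib

open scoped BigOperators

/-- The `i`-th standard basis vector of `ℝ^n`. -/
noncomputable def stdVec (n : ℕ) (i : Fin n) : Fin n → ℝ := Pi.single i 1

/-- The last standard basis vector `e_n` of `ℝ^{n+2}`. -/
noncomputable def lastVec (n : ℕ) : Fin (n + 2) → ℝ := stdVec (n + 2) (Fin.last (n + 1))

/-- The linear functional `φ(x) = ∑ i, a i * x i`. -/
def phi (n : ℕ) (a : Fin (n + 2) → ℝ) (x : Fin (n + 2) → ℝ) : ℝ := ∑ i, a i * x i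

/-- A vertex of the cross-polytope `◇^n`: one of the `2n` points `±e_i`. -/
def IsCPVertex (n : ℕ) (x : Fin n → ℝ) : Prop :=
  ∃ i : Fin n, x = stdVec n i ∨ x = -stdVec n i

/-- The cross-polytope `◇^n = conv{±e_1, …, ±e_n}`. -/
noncomputable def crossPoly (n : ℕ) : Set (Fin n → ℝ) :=
  convexHull ℝ {x | IsCPVertex n x}

/-- A `φ`-monotone path on `◇^{n+2}`, encoded as the list of its vertices:
it starts at `-e_n`, ends at `e_n`, visits only vertices, is strictly `φ`-increasing,
and consecutive vertices are not antipodal. -/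
def IsMonoPath (n : ℕ) (a : Fin (n + 2) → ℝ) (l : List (Fin (n + 2) → ℝ)) : Prop :=
  l.head? = some (-lastVec n) ∧
  l.getLast? = some (lastVec n) ∧
  (∀ v ∈ l, IsCPVertex (n + 2) v) ∧
  l.Chain' (fun u v => phi n a u < phi n a v ∧ v ≠ -u)

/-- A monotone path is combinatorially coherent if no antipodal pair `±e_j`
(`j ∈ {1, …, n-1}`) occurs among its interior vertices. -/
def CombCoherent (n : ℕ) (l : List (Fin (n + 2) → ℝ)) : Prop :=
  ¬ ∃ j : Fin (n + 1), stdVec (n + 2) j.castSucc ∈ l.tail.dropLast ∧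
      -stdVec (n + 2) j.castSucc ∈ l.tail.dropLast

/-- The Billera–Sturmfels point `p(γ)` associated to a monotone path. -/
noncomputable def pathPoint (n : ℕ) (a : Fin (n + 2) → ℝ) (l : List (Fin (n + 2) → ℝ)) :
    Fin (n + 2) → ℝ :=
  ((l.zip l.tail).map fun q =>
    ((phi n a q.2 - phi n a q.1) / (4 * a (Fin.last (n + 1)))) • (q.1 + q.2)).sum

/-- The monotone path polytope `MPP_φ(◇^{n+2})`. -/
noncomputable def MPP (n : ℕ) (a : Fin (n + 2) → ℝ) : Set (Fin (n + 2) → ℝ) :=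
  convexHull ℝ {x | ∃ l, IsMonoPath n a l ∧ x = pathPoint n a l}

open Classical in
/-- The sign vector `σ(γ) ∈ {-1,0,1}^{n+1}` of a monotone path. -/
noncomputable def sigmaVec (n : ℕ) (l : List (Fin (n + 2) → ℝ)) : Fin (n + 1) → ℤ :=
  fun j =>
    if stdVec (n + 2) j.castSucc ∈ l then 1
    else if -stdVec (n + 2) j.castSucc ∈ l then -1 else 0

section Aux
open List

variable {n : ℕ}

/-- abbreviation for standard basis vector -/
noncomputable abbrev Ev (n : ℕ) (i : Fin (n+2)) : Fin (n+2) → ℝ := stdVec (n+2) i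

lemma Ev_apply (i k : Fin (n+2)) : Ev n i k = if k = i then 1 else 0 := by
  simp [Ev, stdVec, Pi.single_apply]

lemma Ev_inj {i j : Fin (n+2)} (h : Ev n i = Ev n j) : i = j := by
  by_contra hne
  have := congrFun h i
  rw [Ev_apply, Ev_apply, if_pos rfl, if_neg hne] at this
  norm_num at this

lemma Ev_ne_neg (i j : Fin (n+2)) : Ev n i ≠ -Ev n j := by
  intro h
  have := congrFun h i
  rw [Ev_apply, if_pos rfl] at this
  simp only [Pi.neg_apply, Ev_apply] at this
  by_cases hj : i = j <;> simp [hj] at this <;> norm_num at this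

lemma neg_Ev_inj {i j : Fin (n+2)} (h : -Ev n i = -Ev n j) : i = j :=
  Ev_inj (by rw [← neg_neg (Ev n i), h, neg_neg])

lemma phi_Ev (a : Fin (n+2) → ℝ) (i : Fin (n+2)) : phi n a (Ev n i) = a i := by
  simp only [phi, Ev_apply, mul_ite, mul_one, mul_zero]
  simp

lemma phi_neg (a x) : phi n a (-x) = -phi n a x := by
  simp [phi, mul_neg, Finset.sum_neg]

lemma phi_neg_Ev (a : Fin (n+2) → ℝ) (i : Fin (n+2)) : phi n a (-Ev n i) = -a i := by
  rw [phi_neg, phi_Ev]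

end Aux
namespace List

theorem chain'_cons' {α : Type*} {R : α → α → Prop} {x : α} {l : List α} :
    Chain' R (x :: l) ↔ (∀ y ∈ head? l, R x y) ∧ Chain' R l := by
  unfold Chain'; exact isChain_cons

theorem Pairwise.chain' {α : Type*} {R : α → α → Prop} {l : List α} (p : Pairwise R l) :
    Chain' R l := by
  unfold Chain'; exact p.isChain

theorem chain'_iff_pairwise {α : Type*} {R : α → α → Prop} [IsTrans α R] {l : List α} :
    Chain' R l ↔ Pairwise R l := by
  unfold Chain'; exact isChain_iff_pairwise

theorem chain'_pair {α : Type*} {R : α → α → Prop} {x y : α} : Chain' R [x, y] ↔ R x y := by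
  unfold Chain'; exact isChain_pair

theorem chain'_append {α : Type*} {R : α → α → Prop} {l₁ l₂ : List α} :
    Chain' R (l₁ ++ l₂) ↔ Chain' R l₁ ∧ Chain' R l₂ ∧ ∀ x ∈ l₁.getLast?, ∀ y ∈ l₂.head?, R x y := by
  unfold Chain'; exact isChain_append

theorem chain'_singleton {α : Type*} {R : α → α → Prop} (a : α) : Chain' R [a] := by
  unfold Chain'; exact isChain_singleton a

theorem Chain'.imp {α : Type*} {R S : α → α → Prop} (H : ∀ a b, R a b → S a b) {l : List α}
    (p : Chain' R l) : Chain' S l := by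
  unfold Chain' at *; exact p.imp (fun a b => H a b)

end List
section Count

abbrev BB := Bool × Bool

def Pgood (m : ℕ) (s : Fin m → BB) : Prop :=
  ∀ i, s i = (true, true) → ∃ j, j < i ∧ s j ≠ (false, false)

instance (m : ℕ) : DecidablePred (Pgood m) := fun _ => by unfold Pgood; infer_instance

lemma pgood_cons_zero (m : ℕ) (s : Fin m → BB) :
    Pgood (m+1) (Fin.cons (false, false) s) ↔ Pgood m s := by
  constructor
  · intro h i hi
    obtain ⟨j, hj, hne⟩ := h i.succ (by simpa using hi)
    rcases Fin.eq_zero_or_eq_succ j with rfl | ⟨j', rfl⟩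
    · simp at hne
    · exact ⟨j', by simpa [Fin.succ_lt_succ_iff] using hj, by simpa using hne⟩
  · intro h i hi
    rcases Fin.eq_zero_or_eq_succ i with rfl | ⟨i', rfl⟩
    · simp at hi
    · obtain ⟨j, hj, hne⟩ := h i' (by simpa using hi)
      exact ⟨j.succ, by simpa [Fin.succ_lt_succ_iff] using hj, by simpa using hne⟩

lemma pgood_cons_ne (m : ℕ) (b : BB) (hb : b ≠ (false, false)) (hb' : b ≠ (true, true))
    (s : Fin m → BB) : Pgood (m+1) (Fin.cons b s) := by
  intro i hi
  rcases Fin.eq_zero_or_eq_succ i with rfl | ⟨i', rfl⟩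
  · simp only [Fin.cons_zero] at hi; exact absurd hi hb'
  · exact ⟨0, Fin.succ_pos _, by simpa using hb⟩

lemma pgood_cons_tt (m : ℕ) (s : Fin m → BB) :
    ¬ Pgood (m+1) (Fin.cons (true, true) s) := by
  intro h
  obtain ⟨j, hj, _⟩ := h 0 (by simp)
  exact absurd hj (Fin.not_lt_zero j)

/-- split-off equivalence -/
def consEquivP (m : ℕ) :
    {s : Fin (m+1) → BB // Pgood (m+1) s} ≃
      Σ b : BB, {s' : Fin m → BB // Pgood (m+1) (Fin.cons b s')} where
  toFun s := ⟨s.1 0, Fin.tail s.1, by rw [Fin.cons_self_tail]; exact s.2⟩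
  invFun q := ⟨Fin.cons q.1 q.2.1, q.2.2⟩
  left_inv s := Subtype.ext (Fin.cons_self_tail s.1)
  right_inv q := by
    rcases q with ⟨b, s', h⟩
    simp only [Fin.cons_zero]
    congr 1 <;> simp [Fin.tail_cons]

lemma card_pgood : ∀ m : ℕ, 3 * Fintype.card {s : Fin m → BB // Pgood m s} = 2 * 4 ^ m + 1 := by
  intro m
  induction m with
  | zero =>
    have : Fintype.card {s : Fin 0 → BB // Pgood 0 s} = 1 := by
      rw [Fintype.card_eq_one_iff]
      refine ⟨⟨fun i => i.elim0, fun i => i.elim0⟩, ?_⟩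
      rintro ⟨s, hs⟩
      apply Subtype.ext; funext i; exact i.elim0
    rw [this]; norm_num
  | succ m ih =>
    rw [Fintype.card_congr (consEquivP m), Fintype.card_sigma]
    have h00 : Fintype.card {s' : Fin m → BB // Pgood (m+1) (Fin.cons (false, false) s')}
        = Fintype.card {s' : Fin m → BB // Pgood m s'} :=
      Fintype.card_congr (Equiv.subtypeEquivRight (fun s' => pgood_cons_zero m s'))
    have hne : ∀ b : BB, b ≠ (false, false) → b ≠ (true, true) →
        Fintype.card {s' : Fin m → BB // Pgood (m+1) (Fin.cons b s')} = 4 ^ m := by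
      intro b h1 h2
      rw [Fintype.card_congr (Equiv.subtypeUnivEquiv (fun s' => pgood_cons_ne m b h1 h2 s'))]
      rw [Fintype.card_fun]
      simp [Fintype.card_prod]
    have htt : Fintype.card {s' : Fin m → BB // Pgood (m+1) (Fin.cons (true, true) s')} = 0 := by
      rw [Fintype.card_eq_zero_iff]
      exact ⟨fun s => absurd s.2 (pgood_cons_tt m s.1)⟩
    simp only [Fintype.sum_prod_type, Fintype.sum_bool]
    rw [htt, h00, hne (true, false) (by simp) (by simp), hne (false, true) (by simp) (by simp)]
    rw [pow_succ]
    omega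
section Paths
open List

variable {n : ℕ}

/-- filtered index lists -/
def F1 (n : ℕ) (s : Fin (n+1) → BB) : List (Fin (n+1)) :=
  (List.finRange (n+1)).filter fun i => (s i).1

def F2 (n : ℕ) (s : Fin (n+1) → BB) : List (Fin (n+1)) :=
  (List.finRange (n+1)).filter fun i => (s i).2

noncomputable def negL (n : ℕ) (s : Fin (n+1) → BB) : List (Fin (n+2) → ℝ) :=
  (F1 n s).reverse.map fun i => -Ev n i.castSucc

noncomputable def posL (n : ℕ) (s : Fin (n+1) → BB) : List (Fin (n+2) → ℝ) :=
  (F2 n s).map fun i => Ev n i.castSucc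

noncomputable def Lpath (n : ℕ) (s : Fin (n+1) → BB) : List (Fin (n+2) → ℝ) :=
  -Ev n (Fin.last (n+1)) :: (negL n s ++ posL n s ++ [Ev n (Fin.last (n+1))])

lemma mem_F1 (s : Fin (n+1) → BB) (i : Fin (n+1)) : i ∈ F1 n s ↔ (s i).1 = true := by
  simp [F1]

lemma mem_F2 (s : Fin (n+1) → BB) (i : Fin (n+1)) : i ∈ F2 n s ↔ (s i).2 = true := by
  simp [F2]

lemma pairwise_F1 (s : Fin (n+1) → BB) : (F1 n s).Pairwise (· < ·) :=
  List.Pairwise.sublist List.filter_sublist (List.pairwise_lt_finRange _)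

lemma pairwise_F2 (s : Fin (n+1) → BB) : (F2 n s).Pairwise (· < ·) :=
  List.Pairwise.sublist List.filter_sublist (List.pairwise_lt_finRange _)

/-- head of a sorted list containing i with everything below i excluded is i -/
lemma head_of_min {l : List (Fin (n+1))} (hp : l.Pairwise (· < ·)) {i : Fin (n+1)}
    (hi : i ∈ l) (hmin : ∀ j ∈ l, ¬ j < i) : l.head? = some i := by
  cases l with
  | nil => simp at hi
  | cons h t =>
    rcases List.mem_cons.1 hi with rfl | hit
    · rfl
    · exact absurd ((List.pairwise_cons.1 hp).1 i hit) (hmin h List.mem_cons_self)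

/-- conversely, head is a member and minimal -/
lemma min_of_head {l : List (Fin (n+1))} (hp : l.Pairwise (· < ·)) {i : Fin (n+1)}
    (hi : l.head? = some i) : i ∈ l ∧ ∀ j ∈ l, i ≤ j := by
  cases l with
  | nil => simp at hi
  | cons h t =>
    obtain rfl : h = i := by simpa using hi
    refine ⟨List.mem_cons_self, ?_⟩
    intro j hj
    rcases List.mem_cons.1 hj with rfl | hjt
    · exact le_refl j
    · exact le_of_lt ((List.pairwise_cons.1 hp).1 j hjt)

lemma mem_Lpath (s : Fin (n+1) → BB) (v : Fin (n+2) → ℝ) :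
    v ∈ Lpath n s ↔ v = -Ev n (Fin.last (n+1)) ∨ v = Ev n (Fin.last (n+1)) ∨
      ∃ j : Fin (n+1), (v = -Ev n j.castSucc ∧ (s j).1 = true) ∨
        (v = Ev n j.castSucc ∧ (s j).2 = true) := by
  simp only [Lpath, negL, posL, List.mem_cons, List.mem_append, List.mem_map,
    List.mem_reverse, mem_F1, mem_F2, List.mem_singleton, List.not_mem_nil, or_false]
  constructor
  · rintro (h | ((⟨j, hj, rfl⟩ | ⟨j, hj, rfl⟩) | h))
    · exact Or.inl h
    · exact Or.inr (Or.inr ⟨j, Or.inl ⟨rfl, hj⟩⟩)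
    · exact Or.inr (Or.inr ⟨j, Or.inr ⟨rfl, hj⟩⟩)
    · exact Or.inr (Or.inl h)
  · rintro (h | h | ⟨j, ⟨rfl, hj⟩ | ⟨rfl, hj⟩⟩)
    · exact Or.inl h
    · exact Or.inr (Or.inr h)
    · exact Or.inr (Or.inl (Or.inl ⟨j, hj, rfl⟩))
    · exact Or.inr (Or.inl (Or.inr ⟨j, hj, rfl⟩))

end Paths
section Chain
open List

variable {n : ℕ} {a : Fin (n+2) → ℝ}

lemma a_pos (h0 : 0 < a 0) (ha : StrictMono a) (i : Fin (n+2)) : 0 < a i :=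
  lt_of_lt_of_le h0 (ha.monotone (Fin.zero_le i))

lemma mem_negL {s : Fin (n+1) → BB} {v : Fin (n+2) → ℝ} :
    v ∈ negL n s ↔ ∃ j, (s j).1 = true ∧ v = -Ev n j.castSucc := by
  simp only [negL, List.mem_map, List.mem_reverse, mem_F1]
  constructor
  · rintro ⟨j, hj, rfl⟩; exact ⟨j, hj, rfl⟩
  · rintro ⟨j, hj, rfl⟩; exact ⟨j, hj, rfl⟩

lemma mem_posL {s : Fin (n+1) → BB} {v : Fin (n+2) → ℝ} :
    v ∈ posL n s ↔ ∃ j, (s j).2 = true ∧ v = Ev n j.castSucc := by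
  simp only [posL, List.mem_map, mem_F2]
  constructor
  · rintro ⟨j, hj, rfl⟩; exact ⟨j, hj, rfl⟩
  · rintro ⟨j, hj, rfl⟩; exact ⟨j, hj, rfl⟩

lemma pairwise_phi (h0 : 0 < a 0) (ha : StrictMono a) (s : Fin (n+1) → BB) :
    (Lpath n s).Pairwise (fun u v => phi n a u < phi n a v) := by
  have hpos := a_pos h0 ha
  have hlt : ∀ i : Fin (n+1), a i.castSucc < a (Fin.last (n+1)) :=
    fun i => ha (Fin.castSucc_lt_last i)
  rw [Lpath, List.pairwise_cons]
  constructor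
  · intro y hy
    rw [List.append_assoc, List.mem_append, List.mem_append] at hy
    rcases hy with hy | hy | hy
    · obtain ⟨j, _, rfl⟩ := mem_negL.1 hy
      rw [phi_neg_Ev, phi_neg_Ev]
      exact neg_lt_neg (hlt j)
    · obtain ⟨j, _, rfl⟩ := mem_posL.1 hy
      rw [phi_neg_Ev, phi_Ev]
      exact lt_trans (neg_lt_zero.2 (hpos _)) (hpos _)
    · rw [List.mem_singleton] at hy; subst hy
      rw [phi_neg_Ev, phi_Ev]
      exact lt_trans (neg_lt_zero.2 (hpos _)) (hpos _)
  rw [List.pairwise_append]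
  refine ⟨?_, List.pairwise_singleton _ _, ?_⟩
  · rw [List.pairwise_append]
    refine ⟨?_, ?_, ?_⟩
    · -- within negL
      rw [negL, List.pairwise_map, List.pairwise_reverse]
      refine (pairwise_F1 s).imp ?_
      intro i j hij
      rw [phi_neg_Ev, phi_neg_Ev]
      exact neg_lt_neg (ha (Fin.castSucc_lt_castSucc_iff.2 hij))
    · -- within posL
      rw [posL, List.pairwise_map]
      refine (pairwise_F2 s).imp ?_
      intro i j hij
      rw [phi_Ev, phi_Ev]
      exact ha (Fin.castSucc_lt_castSucc_iff.2 hij)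
    · -- cross negL posL
      intro x hx y hy
      obtain ⟨i, _, rfl⟩ := mem_negL.1 hx
      obtain ⟨j, _, rfl⟩ := mem_posL.1 hy
      rw [phi_neg_Ev, phi_Ev]
      exact lt_trans (neg_lt_zero.2 (hpos _)) (hpos _)
  · -- cross to [e]
    intro x hx y hy
    rw [List.mem_singleton] at hy; subst hy
    rw [List.mem_append] at hx
    rcases hx with hx | hx
    · obtain ⟨i, _, rfl⟩ := mem_negL.1 hx
      rw [phi_neg_Ev, phi_Ev]
      exact lt_trans (neg_lt_zero.2 (hpos _)) (hpos _)
    · obtain ⟨j, _, rfl⟩ := mem_posL.1 hx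
      rw [phi_Ev, phi_Ev]
      exact hlt j

end Chain
section ChainR
open List

variable {n : ℕ} {a : Fin (n+2) → ℝ} {s : Fin (n+1) → BB}

lemma chain'_and_iff {α : Type*} {P Q : α → α → Prop} {l : List α} :
    l.Chain' (fun u v => P u v ∧ Q u v) ↔ l.Chain' P ∧ l.Chain' Q := by
  simp only [List.Chain', List.isChain_iff_getElem]
  constructor
  · intro h; exact ⟨fun i hi => (h i hi).1, fun i hi => (h i hi).2⟩
  · intro h i hi; exact ⟨h.1 i hi, h.2 i hi⟩

lemma bb_cases {b : BB} (h : b ≠ (false, false)) : b.1 = true ∨ b.2 = true := by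
  rcases b with ⟨_ | _, _ | _⟩ <;> simp_all

lemma negL_getLast? (s : Fin (n+1) → BB) :
    (negL n s).getLast? = Option.map (fun i => -Ev n i.castSucc) (F1 n s).head? := by
  rw [negL, List.getLast?_map, List.getLast?_reverse]

lemma posL_head? (s : Fin (n+1) → BB) :
    (posL n s).head? = Option.map (fun i => Ev n i.castSucc) (F2 n s).head? := by
  rw [posL, List.head?_map]

lemma cast_ne_Ev_last (j : Fin (n+1)) : Ev n j.castSucc ≠ Ev n (Fin.last (n+1)) :=
  fun h => (Fin.castSucc_lt_last j).ne (Ev_inj h)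

/-- the crucial junction fact from `Pgood` -/
lemma junction_ne (hs : Pgood (n+1) s) :
    ∀ x ∈ (negL n s).getLast?, ∀ y ∈ (posL n s).head?, y ≠ -x := by
  intro x hx y hy
  rw [Option.mem_def, negL_getLast?, Option.map_eq_some_iff] at hx
  rw [Option.mem_def, posL_head?, Option.map_eq_some_iff] at hy
  obtain ⟨i, hi, rfl⟩ := hx
  obtain ⟨j, hj, rfl⟩ := hy
  rw [neg_neg]
  intro hij
  obtain rfl : j = i := Fin.castSucc_injective _ (Ev_inj hij)
  have hmin1 := min_of_head (pairwise_F1 s) hi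
  have hmin2 := min_of_head (pairwise_F2 s) hj
  have hstt : s j = (true, true) :=
    Prod.ext ((mem_F1 s j).1 hmin1.1) ((mem_F2 s j).1 hmin2.1)
  obtain ⟨k, hk, hkne⟩ := hs j hstt
  rcases bb_cases hkne with h | h
  · exact absurd hk (not_lt.2 (hmin1.2 k ((mem_F1 s k).2 h)))
  · exact absurd hk (not_lt.2 (hmin2.2 k ((mem_F2 s k).2 h)))

lemma interior_ne_nil (hnz : ∃ i, s i ≠ (false, false)) : negL n s ++ posL n s ≠ [] := by
  obtain ⟨i, hi⟩ := hnz
  rw [Ne, List.append_eq_nil_iff]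
  rcases bb_cases hi with h | h
  · exact fun hh => List.ne_nil_of_mem (mem_negL.2 ⟨i, h, rfl⟩) hh.1
  · exact fun hh => List.ne_nil_of_mem (mem_posL.2 ⟨i, h, rfl⟩) hh.2

lemma chain_ne (hs : Pgood (n+1) s) (hnz : ∃ i, s i ≠ (false, false)) :
    (Lpath n s).Chain' (fun u v => v ≠ -u) := by
  rw [Lpath, List.chain'_cons']
  constructor
  · -- head junction
    intro y hy
    rw [List.head?_append_of_ne_nil _ (interior_ne_nil hnz)] at hy
    have hym := List.mem_of_mem_head? hy
    rw [neg_neg]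
    rw [List.mem_append] at hym
    rcases hym with h | h
    · obtain ⟨j, _, rfl⟩ := mem_negL.1 h
      exact Ne.symm (Ev_ne_neg _ _)
    · obtain ⟨j, _, rfl⟩ := mem_posL.1 h
      exact cast_ne_Ev_last j
  rw [List.chain'_append]
  refine ⟨?_, List.chain'_singleton _, ?_⟩
  · rw [List.chain'_append]
    refine ⟨?_, ?_, junction_ne hs⟩
    · -- within negL
      refine List.Pairwise.chain' ?_
      rw [negL, List.pairwise_map, List.pairwise_reverse]
      refine (pairwise_F1 s).imp ?_
      intro i j _
      simpa using Ne.symm (Ev_ne_neg (n := n) j.castSucc i.castSucc)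
    · -- within posL
      refine List.Pairwise.chain' ?_
      rw [posL, List.pairwise_map]
      refine (pairwise_F2 s).imp ?_
      intro i j _
      exact Ev_ne_neg (n := n) j.castSucc i.castSucc
  · -- junction to [e]
    intro x hx y hy
    have hxm := List.mem_of_mem_getLast? hx
    obtain rfl : Ev n (Fin.last (n+1)) = y := by simpa using hy
    rw [List.mem_append] at hxm
    rcases hxm with h | h
    · obtain ⟨j, _, rfl⟩ := mem_negL.1 h
      rw [neg_neg]
      exact Ne.symm (cast_ne_Ev_last j)
    · obtain ⟨j, _, rfl⟩ := mem_posL.1 h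
      exact Ev_ne_neg _ _

lemma monoPath_Lpath (h0 : 0 < a 0) (ha : StrictMono a)
    (hs : Pgood (n+1) s) (hnz : ∃ i, s i ≠ (false, false)) :
    IsMonoPath n a (Lpath n s) := by
  refine ⟨rfl, ?_, ?_, ?_⟩
  · show (Lpath n s).getLast? = some (lastVec n)
    rw [Lpath, ← List.cons_append, List.getLast?_concat]
    rfl
  · intro v hv
    rcases (mem_Lpath s v).1 hv with h | h | ⟨j, ⟨h, _⟩ | ⟨h, _⟩⟩
    · exact ⟨Fin.last (n+1), Or.inr h⟩
    · exact ⟨Fin.last (n+1), Or.inl h⟩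
    · exact ⟨j.castSucc, Or.inr h⟩
    · exact ⟨j.castSucc, Or.inl h⟩
  · rw [chain'_and_iff]
    exact ⟨List.Pairwise.chain' (pairwise_phi h0 ha s), chain_ne hs hnz⟩

end ChainR
section Converse
open List

variable {n : ℕ} {a : Fin (n+2) → ℝ} {l : List (Fin (n+2) → ℝ)}

open Classical in
noncomputable def sOf (n : ℕ) (l : List (Fin (n+2) → ℝ)) : Fin (n+1) → BB :=
  fun j => (if -Ev n j.castSucc ∈ l then true else false,
            if Ev n j.castSucc ∈ l then true else false)

lemma sOf_fst (j : Fin (n+1)) : (sOf n l j).1 = true ↔ -Ev n j.castSucc ∈ l := by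
  classical
  by_cases h : -Ev n j.castSucc ∈ l <;> simp [sOf, h]

lemma sOf_snd (j : Fin (n+1)) : (sOf n l j).2 = true ↔ Ev n j.castSucc ∈ l := by
  classical
  by_cases h : Ev n j.castSucc ∈ l <;> simp [sOf, h]

lemma philt_trans : IsTrans (Fin (n+2) → ℝ) (fun u v => phi n a u < phi n a v) :=
  ⟨fun _ _ _ => lt_trans⟩

lemma eq_Lpath (h0 : 0 < a 0) (ha : StrictMono a) (hl : IsMonoPath n a l) :
    l = Lpath n (sOf n l) := by
  obtain ⟨hhead, hlast, hvert, hchain⟩ := hl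
  haveI := philt_trans (n := n) (a := a)
  haveI : IsAntisymm (Fin (n+2) → ℝ) (fun u v => phi n a u < phi n a v) :=
    ⟨fun _ _ h1 h2 => absurd h2 (lt_asymm h1)⟩
  have hpl : l.Pairwise (fun u v => phi n a u < phi n a v) :=
    List.chain'_iff_pairwise.1 (List.Chain'.imp (fun _ _ h => h.1) hchain)
  have hpL : (Lpath n (sOf n l)).Pairwise (fun u v => phi n a u < phi n a v) :=
    pairwise_phi h0 ha _
  have ndl : l.Nodup := hpl.imp (fun h => fun he => absurd h (by rw [he]; exact lt_irrefl _))
  have ndL : (Lpath n (sOf n l)).Nodup :=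
    hpL.imp (fun h => fun he => absurd h (by rw [he]; exact lt_irrefl _))
  have hmemhead : -Ev n (Fin.last (n+1)) ∈ l :=
    List.mem_of_mem_head? (by rw [hhead]; rfl)
  have hmemlast : Ev n (Fin.last (n+1)) ∈ l :=
    List.mem_of_mem_getLast? (by rw [hlast]; rfl)
  have hmem : ∀ v, v ∈ l ↔ v ∈ Lpath n (sOf n l) := by
    intro v
    rw [mem_Lpath]
    constructor
    · intro hv
      obtain ⟨i, hi | hi⟩ := hvert v hv
      · by_cases hil : i = Fin.last (n+1)
        · subst hil; exact Or.inr (Or.inl hi)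
        · obtain ⟨j, rfl⟩ := Fin.exists_castSucc_eq.2 hil
          exact Or.inr (Or.inr ⟨j, Or.inr ⟨hi, (sOf_snd j).2 (by show stdVec (n+2) j.castSucc ∈ l; rwa [← hi])⟩⟩)
      · by_cases hil : i = Fin.last (n+1)
        · subst hil; exact Or.inl hi
        · obtain ⟨j, rfl⟩ := Fin.exists_castSucc_eq.2 hil
          exact Or.inr (Or.inr ⟨j, Or.inl ⟨hi, (sOf_fst j).2 (by show -stdVec (n+2) j.castSucc ∈ l; rwa [← hi])⟩⟩)
    · rintro (rfl | rfl | ⟨j, ⟨rfl, hj⟩ | ⟨rfl, hj⟩⟩)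
      · exact hmemhead
      · exact hmemlast
      · exact (sOf_fst j).1 hj
      · exact (sOf_snd j).1 hj
  exact List.Perm.eq_of_pairwise' hpl hpL ((List.perm_ext_iff_of_nodup ndl ndL).2 hmem)

lemma valid_of_monoPath (h0 : 0 < a 0) (ha : StrictMono a) (hl : IsMonoPath n a l) :
    Pgood (n+1) (sOf n l) ∧ ∃ i, sOf n l i ≠ (false, false) := by
  have heq := eq_Lpath h0 ha hl
  obtain ⟨hhead, hlast, hvert, hchain⟩ := hl
  rw [heq] at hchain
  set s := sOf n l with hs
  constructor
  · -- Pgood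
    intro i hi
    by_contra hno
    push_neg at hno
    have hF1 : (F1 n s).head? = some i := by
      refine head_of_min (pairwise_F1 s) ((mem_F1 s i).2 (by rw [hi])) ?_
      intro j hj hji
      have hh := (mem_F1 s j).1 hj
      rw [hno j hji] at hh
      simp at hh
    have hF2 : (F2 n s).head? = some i := by
      refine head_of_min (pairwise_F2 s) ((mem_F2 s i).2 (by rw [hi])) ?_
      intro j hj hji
      have hh := (mem_F2 s j).1 hj
      rw [hno j hji] at hh
      simp at hh
    have hc1 := (List.chain'_cons'.1 hchain).2
    have hc2 := (List.chain'_append.1 hc1).1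
    have hjun := (List.chain'_append.1 hc2).2.2
    have hx : -Ev n i.castSucc ∈ (negL n s).getLast? := by
      rw [Option.mem_def, negL_getLast?, hF1]; rfl
    have hy : Ev n i.castSucc ∈ (posL n s).head? := by
      rw [Option.mem_def, posL_head?, hF2]; rfl
    have := (hjun _ hx _ hy).2
    rw [neg_neg] at this
    exact this rfl
  · -- nonzero
    by_contra hz
    push_neg at hz
    have hF1 : F1 n s = [] := by
      rw [F1, List.filter_eq_nil_iff]
      intro j _
      rw [hz j]
      simp
    have hF2 : F2 n s = [] := by
      rw [F2, List.filter_eq_nil_iff]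
      intro j _
      rw [hz j]
      simp
    rw [Lpath, negL, posL, hF1, hF2] at hchain
    simp only [List.reverse_nil, List.map_nil, List.nil_append] at hchain
    have := (List.chain'_pair.1 hchain).2
    rw [neg_neg] at this
    exact this rfl

end Converse
section Final
open List

variable {n : ℕ} {a : Fin (n+2) → ℝ}

lemma neg_mem_Lpath (s : Fin (n+1) → BB) (j : Fin (n+1)) :
    -Ev n j.castSucc ∈ Lpath n s ↔ (s j).1 = true := by
  rw [mem_Lpath]
  constructor
  · rintro (h | h | ⟨k, ⟨h, hk⟩ | ⟨h, hk⟩⟩)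
    · exact absurd (neg_Ev_inj h) (Fin.castSucc_lt_last j).ne
    · exact absurd h.symm (Ev_ne_neg _ _)
    · rwa [Fin.castSucc_injective _ (neg_Ev_inj h)]
    · exact absurd (h.symm ▸ rfl : Ev n k.castSucc = -Ev n j.castSucc) (Ev_ne_neg _ _)
  · intro h
    exact Or.inr (Or.inr ⟨j, Or.inl ⟨rfl, h⟩⟩)

lemma pos_mem_Lpath (s : Fin (n+1) → BB) (j : Fin (n+1)) :
    Ev n j.castSucc ∈ Lpath n s ↔ (s j).2 = true := by
  rw [mem_Lpath]
  constructor
  · rintro (h | h | ⟨k, ⟨h, hk⟩ | ⟨h, hk⟩⟩)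
    · exact absurd h (Ev_ne_neg _ _)
    · exact absurd (Ev_inj h) (Fin.castSucc_lt_last j).ne
    · exact absurd h (Ev_ne_neg _ _)
    · rwa [Fin.castSucc_injective _ (Ev_inj h)]
  · intro h
    exact Or.inr (Or.inr ⟨j, Or.inr ⟨rfl, h⟩⟩)

lemma Lpath_inj : Function.Injective (Lpath n) := by
  intro s s' h
  funext j
  have h1 : (s j).1 = (s' j).1 := by
    rw [Bool.eq_iff_iff, ← neg_mem_Lpath s j, ← neg_mem_Lpath s' j, h]
  have h2 : (s j).2 = (s' j).2 := by
    rw [Bool.eq_iff_iff, ← pos_mem_Lpath s j, ← pos_mem_Lpath s' j, h]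
  exact Prod.ext h1 h2

end Final

/-- The total number of `φ`-monotone paths on the cross-polytope
`◇^{n+2}` is `(2^{2(n+2)-1} - 2)/3`. -/
theorem card_monotone_paths (n : ℕ) (a : Fin (n + 2) → ℝ)
    (h0 : 0 < a 0) (ha : StrictMono a) :
    Set.ncard {l : List (Fin (n + 2) → ℝ) | IsMonoPath n a l} =
      (2 ^ (2 * (n + 2) - 1) - 2) / 3 := by
  classical
  set V : Set (Fin (n+1) → BB) := {s | Pgood (n+1) s ∧ ∃ i, s i ≠ (false, false)} with hV
  have hset : {l : List (Fin (n + 2) → ℝ) | IsMonoPath n a l} = Lpath n '' V := by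
    ext l
    simp only [Set.mem_setOf_eq, Set.mem_image, hV]
    constructor
    · intro hl
      exact ⟨sOf n l, valid_of_monoPath h0 ha hl, (eq_Lpath h0 ha hl).symm⟩
    · rintro ⟨s, ⟨hs, hnz⟩, rfl⟩
      exact monoPath_Lpath h0 ha hs hnz
  rw [hset, Set.ncard_image_of_injOn (Lpath_inj.injOn)]
  have hzP : Pgood (n+1) (fun _ => (false, false)) := by
    intro i hi; simp at hi
  have hins : {s : Fin (n+1) → BB | Pgood (n+1) s} = insert (fun _ => (false, false)) V := by
    ext s
    simp only [Set.mem_setOf_eq, Set.mem_insert_iff, hV]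
    constructor
    · intro hs
      by_cases hz : s = fun _ => (false, false)
      · exact Or.inl hz
      · refine Or.inr ⟨hs, ?_⟩
        by_contra hno
        push_neg at hno
        exact hz (funext hno)
    · rintro (rfl | ⟨hs, _⟩)
      · exact hzP
      · exact hs
  have hznot : (fun _ => (false, false)) ∉ V := by
    rintro ⟨_, i, hi⟩
    exact hi rfl
  have hcard1 : Set.ncard {s : Fin (n+1) → BB | Pgood (n+1) s} = V.ncard + 1 := by
    rw [hins, Set.ncard_insert_of_notMem hznot (Set.toFinite V)]
  have hcard2 : Set.ncard {s : Fin (n+1) → BB | Pgood (n+1) s}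
      = Fintype.card {s : Fin (n+1) → BB // Pgood (n+1) s} := by
    rw [Set.ncard_eq_toFinset_card', Set.toFinset_card]
    exact Fintype.card_congr (Equiv.subtypeEquivRight (fun s => Iff.rfl))
  have hcount := card_pgood (n+1)
  have hpow : (2:ℕ) ^ (2 * (n + 2) - 1) = 2 * 4 ^ (n+1) := by
    rw [show (4:ℕ) = 2^2 from rfl, ← pow_mul, show 2*(n+2)-1 = 2*(n+1)+1 by omega, pow_succ]
    ring
  rw [hpow]
  omega
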